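/- If θ is sampled uniformly at random from the unit sphere S^{d-1} in R^d (d ≥ 3) and e_1 is any fixed unit vector, then for any α > 0, Pr[|θᵀe_1| ≤ α] ≤ α·√(d·e). -/

import Mathlib

open MeasureTheory Real Set Pointwise

lemma gautschi {x : ℝ} (hx : 0 < x) : Gamma (x + 1/2) ≤ Real.sqrt x * Gamma x := by
  have hx1 : (0:ℝ) < x + 1 := by linarith
  have h := convexOn_log_Gamma.2 (mem_Ioi.2 hx) (mem_Ioi.2 hx1)
    (by norm_num : (0:ℝ) ≤ 1/2) (by norm_num : (0:ℝ) ≤ 1/2) (by norm_num)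
  have hmid : (1/2 : ℝ) • x + (1/2 : ℝ) • (x+1) = x + 1/2 := by ring_nf
  rw [hmid] at h
  simp only [Function.comp_apply, smul_eq_mul] at h
  have hG : 0 < Gamma x := Gamma_pos_of_pos hx
  have hG2 : 0 < Gamma (x + 1/2) := Gamma_pos_of_pos (by linarith)
  have := Real.exp_le_exp.2 h
  rw [Real.exp_log hG2] at this
  calc Gamma (x+1/2) ≤ Real.exp (1/2 * Real.log (Gamma x) + 1/2 * Real.log (Gamma (x+1))) := this
    _ = Real.sqrt x * Gamma x := by
        rw [Real.Gamma_add_one hx.ne']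
        rw [Real.log_mul hx.ne' hG.ne']
        rw [show 1/2 * Real.log (Gamma x) + 1/2 * (Real.log x + Real.log (Gamma x))
            = (Real.log x + (Real.log (Gamma x) + Real.log (Gamma x)))/2 by ring]
        rw [Real.exp_half, Real.exp_add, Real.exp_add, Real.exp_log hx, Real.exp_log hG,
          Real.sqrt_mul hx.le, Real.sqrt_mul_self hG.le]

lemma key (d : ℕ) (hd : 3 ≤ d) :
    2 * Gamma ((d:ℝ)/2 + 1) ≤
      Real.sqrt ((d:ℝ) * Real.exp 1) * Real.sqrt π * Gamma (((d:ℝ)-1)/2 + 1) := by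
  have hd1 : (3:ℝ) ≤ d := by exact_mod_cast hd
  set x : ℝ := ((d:ℝ)+1)/2 with hxdef
  have hx : 0 < x := by positivity
  have h1 : Gamma ((d:ℝ)/2 + 1) ≤ Real.sqrt x * Gamma x := by
    have := gautschi hx
    rw [show x + 1/2 = (d:ℝ)/2 + 1 by rw [hxdef]; ring] at this
    exact this
  have hxg : ((d:ℝ)-1)/2 + 1 = x := by rw [hxdef]; ring
  rw [hxg]
  have hG : 0 < Gamma x := Gamma_pos_of_pos hx
  have h2 : 2 * Real.sqrt x ≤ Real.sqrt ((d:ℝ) * Real.exp 1) * Real.sqrt π := by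
    rw [← Real.sqrt_mul (by positivity), ← Real.sqrt_mul_self (by norm_num : (0:ℝ) ≤ 2),
      ← Real.sqrt_mul (by positivity)]
    apply Real.sqrt_le_sqrt
    have he : (2.7182818283:ℝ) < Real.exp 1 := by
      have := Real.exp_one_gt_d9; linarith
    have hpi : (3.14:ℝ) < π := by have := Real.pi_gt_d6; linarith
    rw [hxdef]
    have hep : (8:ℝ) ≤ Real.exp 1 * π := by nlinarith
    nlinarith [mul_le_mul_of_nonneg_right hep (by linarith : (0:ℝ) ≤ (d:ℝ))]
  calc 2 * Gamma ((d:ℝ)/2 + 1) ≤ 2 * (Real.sqrt x * Gamma x) := by linarith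
    _ = (2 * Real.sqrt x) * Gamma x := by ring
    _ ≤ _ := by apply mul_le_mul_of_nonneg_right h2 hG.le

lemma slab_vol (m : ℕ) (hm : 1 ≤ m) (α : ℝ) (hα : 0 < α) :
    volume ({y : EuclideanSpace ℝ (Fin (m+1)) | |y 0| ≤ α} ∩ Metric.ball 0 1)
      ≤ ENNReal.ofReal (2*α) * ENNReal.ofReal (Real.sqrt π ^ m / Gamma (m/2+1)) := by
  have : Nonempty (Fin m) := ⟨⟨0, hm⟩⟩
  have hA : MeasurableSet ({y : EuclideanSpace ℝ (Fin (m+1)) | |y 0| ≤ α} ∩ Metric.ball 0 1) := by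
    apply MeasurableSet.inter
    · exact measurableSet_le (by fun_prop) measurable_const
    · exact measurableSet_ball
  rw [← ((EuclideanSpace.volume_preserving_symm_measurableEquiv_toLp (Fin (m+1))).symm).measure_preimage
    hA.nullMeasurableSet]
  set B : Set (Fin m → ℝ) := {h | ∑ i, h i ^ 2 ≤ 1} with hB
  have hBm : MeasurableSet B := measurableSet_le (by fun_prop) measurable_const
  have hBvol : volume B = ENNReal.ofReal (Real.sqrt π ^ m / Gamma (m/2+1)) := by
    have h1 : B = (MeasurableEquiv.toLp 2 (Fin m → ℝ)) ⁻¹'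
        (Metric.closedBall (0 : EuclideanSpace ℝ (Fin m)) 1) := by
      ext h
      simp only [hB, mem_setOf_eq, mem_preimage, Metric.mem_closedBall, dist_zero_right,
        EuclideanSpace.norm_eq]
      rw [show ((MeasurableEquiv.toLp 2 (Fin m → ℝ)) h : EuclideanSpace ℝ (Fin m))
          = (WithLp.equiv 2 (Fin m → ℝ)).symm h from rfl]
      simp only [WithLp.equiv_symm_apply, WithLp.ofLp_toLp, Real.norm_eq_abs, sq_abs]
      nth_rewrite 2 [show (1:ℝ) = Real.sqrt 1 by simp]
      rw [Real.sqrt_le_sqrt_iff (by positivity)]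
    rw [h1, ← MeasurableEquiv.symm_symm (MeasurableEquiv.toLp 2 (Fin m → ℝ)),
      ((EuclideanSpace.volume_preserving_symm_measurableEquiv_toLp (Fin m)).symm).measure_preimage
      measurableSet_closedBall.nullMeasurableSet, EuclideanSpace.volume_closedBall]
    simp [Fintype.card_fin]
  calc volume ((MeasurableEquiv.toLp 2 (Fin (m+1) → ℝ)) ⁻¹'
        ({y : EuclideanSpace ℝ (Fin (m+1)) | |y 0| ≤ α} ∩ Metric.ball 0 1))
      ≤ volume ((MeasurableEquiv.piFinSuccAbove (fun _ : Fin (m+1) => ℝ) 0) ⁻¹'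
          (Icc (-α) α ×ˢ B)) := by
        apply measure_mono
        intro g hg
        simp only [mem_preimage, mem_inter_iff, mem_setOf_eq, Metric.mem_ball,
          dist_zero_right] at hg
        obtain ⟨h1, h2⟩ := hg
        have hcoe : ∀ i, ((MeasurableEquiv.toLp 2 (Fin (m+1) → ℝ)) g :
            EuclideanSpace ℝ (Fin (m+1))) i = g i := fun i => rfl
        rw [EuclideanSpace.norm_eq] at h2
        simp only [hcoe, Real.norm_eq_abs, sq_abs] at h1 h2
        have hsum : ∑ i, g i ^ 2 < 1 := by
          have := (Real.sqrt_lt' one_pos).1 h2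
          simpa using this
        constructor
        · simp only [MeasurableEquiv.piFinSuccAbove_apply, Fin.insertNthEquiv, Fin.removeNth]
          constructor
          · simp; linarith [abs_le.1 h1 |>.1]
          · simp; exact (abs_le.1 h1).2
        · simp only [MeasurableEquiv.piFinSuccAbove_apply]
          show ∑ i : Fin m, (g (Fin.succAbove 0 i)) ^ 2 ≤ 1
          have hsplit : ∑ i : Fin (m+1), g i ^ 2
              = g 0 ^ 2 + ∑ i : Fin m, g (Fin.succ i) ^ 2 := Fin.sum_univ_succ _
          have : ∀ i : Fin m, Fin.succAbove 0 i = Fin.succ i := fun i => Fin.succAbove_zero ▸ rfl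
          simp only [this]
          nlinarith [sq_nonneg (g 0)]
    _ = volume (Icc (-α) α ×ˢ B) :=
        (volume_preserving_piFinSuccAbove (fun _ : Fin (m+1) => ℝ) 0).measure_preimage
          ((measurableSet_Icc.prod hBm).nullMeasurableSet)
    _ = ENNReal.ofReal (2*α) * ENNReal.ofReal (Real.sqrt π ^ m / Gamma (m/2+1)) := by
        rw [MeasureTheory.Measure.volume_eq_prod, Measure.prod_prod, Real.volume_Icc, hBvol]
        norm_num
        ring_nf
        rw [ENNReal.ofReal_mul hα.le]
        norm_num
        ring

theorem stmt_2 (d : ℕ) (hd : 3 ≤ d) (e1 : EuclideanSpace ℝ (Fin d)) (he1 : ‖e1‖ = 1)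
    (α : ℝ) (hα : 0 < α) :
    (volume : Measure (EuclideanSpace ℝ (Fin d))).toSphere
        {θ : Metric.sphere (0 : EuclideanSpace ℝ (Fin d)) 1 |
          |(inner ℝ (θ : EuclideanSpace ℝ (Fin d)) e1 : ℝ)| ≤ α} ≤
      ENNReal.ofReal (α * Real.sqrt (d * Real.exp 1)) *
        (volume : Measure (EuclideanSpace ℝ (Fin d))).toSphere Set.univ := by
  obtain ⟨m, rfl⟩ : ∃ m, d = m + 1 := ⟨d - 1, by omega⟩
  set S : Set (Metric.sphere (0 : EuclideanSpace ℝ (Fin (m+1))) 1) :=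
    {θ : Metric.sphere (0 : EuclideanSpace ℝ (Fin (m+1))) 1 | |(inner ℝ (θ : EuclideanSpace ℝ (Fin (m+1))) e1 : ℝ)| ≤ α} with hS
  have hScont : Continuous fun θ : Metric.sphere (0 : EuclideanSpace ℝ (Fin (m+1))) 1 => |(inner ℝ (θ : EuclideanSpace ℝ (Fin (m+1))) e1 : ℝ)| :=
    (continuous_subtype_val.inner continuous_const).abs
  have hSm : MeasurableSet S := (isClosed_le hScont continuous_const).measurableSet
  rw [Measure.toSphere_apply' _ hSm, Measure.toSphere_apply_univ, mul_left_comm]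
  apply mul_le_mul_right
  -- obtain orthonormal basis with b 0 = e1
  have hv : Orthonormal ℝ (Set.restrict ({0} : Set (Fin (m+1))) (fun _ => e1)) := by
    constructor
    · intro i; exact he1
    · intro i j hij
      exact absurd (Subtype.ext (i.2.trans j.2.symm)) hij
  obtain ⟨b, hb⟩ := hv.exists_orthonormalBasis_extension_of_card_eq
    (by simp [finrank_euclideanSpace_fin])
  have hb0 : b 0 = e1 := hb 0 rfl
  set A : Set (EuclideanSpace ℝ (Fin (m+1))) := {x : EuclideanSpace ℝ (Fin (m+1)) | |(inner ℝ x e1 : ℝ)| ≤ α} ∩ Metric.ball 0 1 with hA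
  have hAm : MeasurableSet A := by
    apply MeasurableSet.inter
    · exact (isClosed_le ((continuous_id.inner continuous_const).abs)
        continuous_const).measurableSet
    · exact measurableSet_ball
  have hsub : (Ioo (0:ℝ) 1) • ((↑) '' S) ⊆ A := by
    rintro x hx
    rw [Set.mem_smul] at hx
    obtain ⟨r, hr, y, hy, rfl⟩ := hx
    obtain ⟨θ, hθ, rfl⟩ := hy
    have hθn : ‖(θ : EuclideanSpace ℝ (Fin (m+1)))‖ = 1 := by
      have := θ.2; rwa [mem_sphere_zero_iff_norm] at this
    constructor
    · show |(inner ℝ (r • (θ : EuclideanSpace ℝ (Fin (m+1)))) e1 : ℝ)| ≤ α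
      rw [real_inner_smul_left, abs_mul, abs_of_pos hr.1]
      calc r * |(inner ℝ (θ : EuclideanSpace ℝ (Fin (m+1))) e1 : ℝ)| ≤ 1 * α :=
            mul_le_mul hr.2.le hθ (abs_nonneg _) one_pos.le
        _ = α := one_mul α
    · show r • (θ : EuclideanSpace ℝ (Fin (m+1))) ∈ Metric.ball 0 1
      rw [Metric.mem_ball, dist_zero_right, norm_smul, hθn, mul_one,
        Real.norm_eq_abs, abs_of_pos hr.1]
      exact hr.2
  have hpre : b.repr.symm ⁻¹' A
      = {y : EuclideanSpace ℝ (Fin (m+1)) | |y 0| ≤ α} ∩ Metric.ball 0 1 := by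
    ext y
    simp only [Set.mem_preimage, hA, Set.mem_inter_iff, Set.mem_setOf_eq, Metric.mem_ball,
      dist_zero_right]
    have h1 : (inner ℝ (b.repr.symm y) e1 : ℝ) = y 0 := by
      rw [← hb0, real_inner_comm, ← b.repr_apply_apply, LinearIsometryEquiv.apply_symm_apply]
    have h2 : ‖b.repr.symm y‖ = ‖y‖ := b.repr.symm.norm_map y
    rw [h1, h2]
  have hvolA : volume A ≤ ENNReal.ofReal (2*α) * ENNReal.ofReal (Real.sqrt π ^ m / Gamma (m/2+1)) := by
    rw [← (b.measurePreserving_repr_symm).measure_preimage hAm.nullMeasurableSet, hpre]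
    exact slab_vol m (by omega) α hα
  calc volume ((Ioo (0:ℝ) 1) • ((↑) '' S)) ≤ volume A := measure_mono hsub
    _ ≤ ENNReal.ofReal (2*α) * ENNReal.ofReal (Real.sqrt π ^ m / Gamma (m/2+1)) := hvolA
    _ ≤ ENNReal.ofReal (α * Real.sqrt ((m+1 : ℕ) * Real.exp 1)) * volume (Metric.ball (0:EuclideanSpace ℝ (Fin (m+1))) 1) := by
        rw [EuclideanSpace.volume_ball, Fintype.card_fin]
        simp only [ENNReal.ofReal_one, one_pow, one_mul]
        rw [← ENNReal.ofReal_mul (by positivity), ← ENNReal.ofReal_mul (by positivity)]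
        apply ENNReal.ofReal_le_ofReal
        have hk := key (m+1) hd
        have hG1 : 0 < Gamma ((m:ℝ)/2+1) := Gamma_pos_of_pos (by positivity)
        have hG2 : 0 < Gamma (((m:ℕ)+1:ℝ)/2+1) := Gamma_pos_of_pos (by positivity)
        have hcast : (((m+1:ℕ)):ℝ) = (m:ℝ)+1 := by push_cast; ring
        rw [hcast] at hk
        rw [show ((m:ℝ)+1-1)/2+1 = (m:ℝ)/2+1 by ring] at hk
        have hP : (0:ℝ) ≤ Real.sqrt π ^ m := by positivity
        rw [hcast]
        rw [show ((m:ℕ)+1 : ℕ) = m + 1 from rfl]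
        rw [mul_div_assoc', mul_div_assoc', div_le_div_iff₀ hG1 hG2]
        have hmm := mul_le_mul_of_nonneg_left hk
          (by positivity : (0:ℝ) ≤ α * Real.sqrt π ^ m)
        rw [pow_succ]
        nlinarith [hmm]
    _ = _ := rfl
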